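/- Let I ⊆ ℝ be an open interval, g : I → Matₙ(ℝ) twice differentiable with g(u) invertible for all u ∈ I, and m : I → ℝ twice differentiable with m(u) > 0 for all u ∈ I. Define the rescaled tensor g̃ := m⁻²·g and the reparameterized derivative D f := m²·f' (so that D corresponds to d/dU with dU = du/m²). Then on I one has the identity (D g̃)·g̃⁻¹·(D g̃) − 2·D(D g̃) = m²·( g'·g⁻¹·g' − 2·g'' ) + 4·m·m''·g, and consequently tr( g̃⁻¹·(D g̃)·g̃⁻¹·(D g̃) − 2·g̃⁻¹·D(D g̃) ) = 4·m³·( m·P(u) + n·m''(u) ), where P(u) := tr( (1/4)·g(u)⁻¹·g'(u)·g(u)⁻¹·g'(u) − (1/2)·g(u)⁻¹·g''(u) ). In particular, the left-hand trace vanishes identically on I if and only if n·m''(u) + P(u)·m(u) = 0 on I. -/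

import Mathlib

open Matrix Set

attribute [local instance] Matrix.frobeniusNormedAddCommGroup Matrix.frobeniusNormedSpace

/-- The conformally rescaled tensor `g̃ = m⁻² g`. -/
noncomputable def rescaledTensor {n : ℕ} (m : ℝ → ℝ) (g : ℝ → Matrix (Fin n) (Fin n) ℝ) :
    ℝ → Matrix (Fin n) (Fin n) ℝ :=
  fun u => (m u ^ 2)⁻¹ • g u

/-- The reparameterized derivative `D f = m² f'` (corresponding to `d/dU` with `dU = du/m²`). -/
noncomputable def Dop {n : ℕ} (m : ℝ → ℝ) (f : ℝ → Matrix (Fin n) (Fin n) ℝ) :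
    ℝ → Matrix (Fin n) (Fin n) ℝ :=
  fun u => m u ^ 2 • deriv f u

/-- The Ricci coefficient `P(u) = tr((1/4) g⁻¹g'g⁻¹g' − (1/2) g⁻¹g'')` of a Rosen plane wave. -/
noncomputable def ricciCoeff {n : ℕ} (g g' g'' : ℝ → Matrix (Fin n) (Fin n) ℝ) : ℝ → ℝ :=
  fun u => ((1/4 : ℝ) • ((g u)⁻¹ * g' u * (g u)⁻¹ * g' u) -
    (1/2 : ℝ) • ((g u)⁻¹ * g'' u)).trace

private lemma key_alg {n : ℕ} (A A' A'' B : Matrix (Fin n) (Fin n) ℝ) (p q r : ℝ)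
    (hp : p ≠ 0) (hAB : A * B = 1) (hBA : B * A = 1) :
    (A' - (2 * q / p) • A) * (p ^ 2 • B) * (A' - (2 * q / p) • A)
      - (2 : ℝ) • (p ^ 2 • (A'' - ((2 * r * p - 2 * q * q) / p ^ 2) • A - (2 * q / p) • A'))
    = p ^ 2 • (A' * B * A' - (2 : ℝ) • A'') + (4 * p * r) • A := by
  have h1 : A' * B * A = A' := by rw [mul_assoc, hBA, mul_one]
  have h2 : A * B * A' = A' := by rw [hAB, one_mul]
  have h3 : A * B * A = A := by rw [hAB, one_mul]
  simp only [sub_mul, mul_sub, smul_mul_assoc, mul_smul_comm, smul_smul, smul_sub, smul_add,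
    h1, h2, h3]
  match_scalars <;> field_simp <;> ring

theorem conformal_vacuum_condition {n : ℕ} (a b : ℝ)
    (g g' g'' : ℝ → Matrix (Fin n) (Fin n) ℝ) (m m' m'' : ℝ → ℝ)
    (hg : ∀ u ∈ Set.Ioo a b, HasDerivAt g (g' u) u)
    (hg' : ∀ u ∈ Set.Ioo a b, HasDerivAt g' (g'' u) u)
    (hginv : ∀ u ∈ Set.Ioo a b, IsUnit (g u))
    (hm : ∀ u ∈ Set.Ioo a b, HasDerivAt m (m' u) u)
    (hm' : ∀ u ∈ Set.Ioo a b, HasDerivAt m' (m'' u) u)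
    (hmpos : ∀ u ∈ Set.Ioo a b, 0 < m u) :
    (∀ u ∈ Set.Ioo a b,
      Dop m (rescaledTensor m g) u * (rescaledTensor m g u)⁻¹ * Dop m (rescaledTensor m g) u
          - (2 : ℝ) • Dop m (Dop m (rescaledTensor m g)) u
        = m u ^ 2 • (g' u * (g u)⁻¹ * g' u - (2 : ℝ) • g'' u) + (4 * m u * m'' u) • g u) ∧
    (∀ u ∈ Set.Ioo a b,
      ((rescaledTensor m g u)⁻¹ * Dop m (rescaledTensor m g) u *
          (rescaledTensor m g u)⁻¹ * Dop m (rescaledTensor m g) u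
        - (2 : ℝ) • ((rescaledTensor m g u)⁻¹ * Dop m (Dop m (rescaledTensor m g)) u)).trace
        = 4 * m u ^ 3 * (m u * ricciCoeff g g' g'' u + (n : ℝ) * m'' u)) ∧
    ((∀ u ∈ Set.Ioo a b,
      ((rescaledTensor m g u)⁻¹ * Dop m (rescaledTensor m g) u *
          (rescaledTensor m g u)⁻¹ * Dop m (rescaledTensor m g) u
        - (2 : ℝ) • ((rescaledTensor m g u)⁻¹ * Dop m (Dop m (rescaledTensor m g)) u)).trace
        = 0) ↔
     (∀ u ∈ Set.Ioo a b, (n : ℝ) * m'' u + ricciCoeff g g' g'' u * m u = 0)) := by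
  have hso : IsOpen (Set.Ioo a b) := isOpen_Ioo
  -- first derivative formula
  have hA : ∀ u ∈ Set.Ioo a b, Dop m (rescaledTensor m g) u
      = g' u - (2 * m' u / m u) • g u := by
    intro u hu
    have hmu : m u ≠ 0 := (hmpos u hu).ne'
    have h1 : HasDerivAt (fun v => (m v ^ 2)⁻¹)
        (-((2 : ℕ) * m u ^ (2 - 1) * m' u) / (m u ^ 2) ^ 2) u :=
      ((hm u hu).pow 2).inv (pow_ne_zero 2 hmu)
    have hd : HasDerivAt (rescaledTensor m g)
        ((m u ^ 2)⁻¹ • g' u + (-((2 : ℕ) * m u ^ (2 - 1) * m' u) / (m u ^ 2) ^ 2) • g u) u :=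
      h1.smul (hg u hu)
    show m u ^ 2 • deriv (rescaledTensor m g) u = _
    rw [show deriv (rescaledTensor m g) u = _ from hd.deriv]
    match_scalars <;> field_simp <;> ring
  -- second derivative formula
  have hB : ∀ u ∈ Set.Ioo a b, Dop m (Dop m (rescaledTensor m g)) u
      = m u ^ 2 • (g'' u - ((2 * m'' u * m u - 2 * m' u * m' u) / m u ^ 2) • g u
          - (2 * m' u / m u) • g' u) := by
    intro u hu
    have hmu : m u ≠ 0 := (hmpos u hu).ne'
    have hc : HasDerivAt (fun v => 2 * m' v / m v)
        ((2 * m'' u * m u - 2 * m' u * m u * (m' u / m u)) / m u ^ 2) u := by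
      have := (((hm' u hu).const_mul (2 : ℝ)).div (hm u hu) hmu)
      refine this.congr_deriv ?_
      congr 1
      field_simp
    have hF : HasDerivAt (fun v => g' v - (2 * m' v / m v) • g v)
        (g'' u - ((2 * m' u / m u) • g' u
          + ((2 * m'' u * m u - 2 * m' u * m u * (m' u / m u)) / m u ^ 2) • g u)) u :=
      (hg' u hu).sub (hc.smul (hg u hu))
    have heq : Dop m (rescaledTensor m g) =ᶠ[nhds u] fun v => g' v - (2 * m' v / m v) • g v :=
      Filter.eventually_of_mem (hso.mem_nhds hu) (fun v hv => hA v hv)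
    show m u ^ 2 • deriv (Dop m (rescaledTensor m g)) u = _
    rw [show deriv (Dop m (rescaledTensor m g)) u = _ from heq.deriv_eq.trans hF.deriv]
    match_scalars <;> field_simp <;> ring
  -- inverse formula
  have hinv : ∀ u ∈ Set.Ioo a b, (rescaledTensor m g u)⁻¹ = m u ^ 2 • (g u)⁻¹ := by
    intro u hu
    have hmu : m u ≠ 0 := (hmpos u hu).ne'
    have hdet : IsUnit (g u).det := (Matrix.isUnit_iff_isUnit_det _).mp (hginv u hu)
    apply Matrix.inv_eq_right_inv
    show ((m u ^ 2)⁻¹ • g u) * (m u ^ 2 • (g u)⁻¹) = 1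
    rw [smul_mul_assoc, mul_smul_comm, smul_smul, Matrix.mul_nonsing_inv _ hdet,
      inv_mul_cancel₀ (pow_ne_zero 2 hmu), one_smul]
  -- part 1
  have H1 : ∀ u ∈ Set.Ioo a b,
      Dop m (rescaledTensor m g) u * (rescaledTensor m g u)⁻¹ * Dop m (rescaledTensor m g) u
          - (2 : ℝ) • Dop m (Dop m (rescaledTensor m g)) u
        = m u ^ 2 • (g' u * (g u)⁻¹ * g' u - (2 : ℝ) • g'' u) + (4 * m u * m'' u) • g u := by
    intro u hu
    have hmu : m u ≠ 0 := (hmpos u hu).ne'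
    have hdet : IsUnit (g u).det := (Matrix.isUnit_iff_isUnit_det _).mp (hginv u hu)
    have hAB : g u * (g u)⁻¹ = 1 := Matrix.mul_nonsing_inv _ hdet
    have hBA : (g u)⁻¹ * g u = 1 := Matrix.nonsing_inv_mul _ hdet
    rw [hA u hu, hB u hu, hinv u hu]
    have key := key_alg (g u) (g' u) (g'' u) (g u)⁻¹ (m u) (m' u) (m'' u) hmu hAB hBA
    exact key
  -- part 2
  have H2 : ∀ u ∈ Set.Ioo a b,
      ((rescaledTensor m g u)⁻¹ * Dop m (rescaledTensor m g) u *
          (rescaledTensor m g u)⁻¹ * Dop m (rescaledTensor m g) u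
        - (2 : ℝ) • ((rescaledTensor m g u)⁻¹ * Dop m (Dop m (rescaledTensor m g)) u)).trace
        = 4 * m u ^ 3 * (m u * ricciCoeff g g' g'' u + (n : ℝ) * m'' u) := by
    intro u hu
    have hmu : m u ≠ 0 := (hmpos u hu).ne'
    have hdet : IsUnit (g u).det := (Matrix.isUnit_iff_isUnit_det _).mp (hginv u hu)
    have hAB : g u * (g u)⁻¹ = 1 := Matrix.mul_nonsing_inv _ hdet
    have hBA : (g u)⁻¹ * g u = 1 := Matrix.nonsing_inv_mul _ hdet
    have hfac : (rescaledTensor m g u)⁻¹ * Dop m (rescaledTensor m g) u *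
          (rescaledTensor m g u)⁻¹ * Dop m (rescaledTensor m g) u
        - (2 : ℝ) • ((rescaledTensor m g u)⁻¹ * Dop m (Dop m (rescaledTensor m g)) u)
        = (rescaledTensor m g u)⁻¹ *
            (Dop m (rescaledTensor m g) u * (rescaledTensor m g u)⁻¹ *
              Dop m (rescaledTensor m g) u
            - (2 : ℝ) • Dop m (Dop m (rescaledTensor m g)) u) := by
      simp only [mul_sub, mul_smul_comm, mul_assoc]
    rw [hfac, H1 u hu, hinv u hu, ricciCoeff]
    simp only [mul_add, mul_sub, mul_smul_comm, smul_mul_assoc, smul_smul, smul_sub,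
      Matrix.trace_add, Matrix.trace_sub, Matrix.trace_smul, smul_eq_mul, mul_assoc, hBA,
      Matrix.trace_one, Fintype.card_fin]
    ring
  refine ⟨H1, H2, ?_⟩
  constructor
  · intro h u hu
    have h0 := (H2 u hu).symm.trans (h u hu)
    have hp : (0 : ℝ) < 4 * m u ^ 3 := by have := hmpos u hu; positivity
    have := (mul_eq_zero.mp h0).resolve_left hp.ne'
    linarith
  · intro h u hu
    rw [H2 u hu]
    have h0 := h u hu
    have : m u * ricciCoeff g g' g'' u + (n : ℝ) * m'' u = 0 := by linarith
    rw [this, mul_zero]
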